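/- Fix θ > 0 and positive integers n > k, and let s be a probability density on ℝ satisfying s^{*(n−k)}(u) ≤ B(n−k) / ((n−k)^{(β+1)/β} + |u|^{1+β}) for constants B > 0 and β ≥ 1. Then for every w > 0, ∫_{−∞}^{∞} exp(−(w − y/n)²/(4θ²)) s^{*(n−k)}(y) dy ≤ min(1, 2^{2+β} B θ √π / (n^{β−1} w^{1+β}) + exp(−w²/(16θ²))). -/

import Mathlib

open MeasureTheory Real
open scoped Convolution

/-- `convIter s k` is the `(k+1)`-fold self-convolution of `s`:
    `convIter s 0 = s` and `convIter s (j-1) = s^{*j}`. -/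
noncomputable def convIter (s : ℝ → ℝ) : ℕ → ℝ → ℝ
  | 0 => s
  | k + 1 => fun x => ∫ y : ℝ, s y * convIter s k (x - y)

lemma convIter_succ_eq (s : ℝ → ℝ) (m : ℕ) :
    convIter s (m + 1) = s ⋆[ContinuousLinearMap.mul ℝ ℝ] convIter s m := by
  ext x
  simp [convIter, convolution, ContinuousLinearMap.mul_apply']

lemma convIter_nonneg (s : ℝ → ℝ) (hs : ∀ x, 0 ≤ s x) : ∀ m x, 0 ≤ convIter s m x
  | 0, x => hs x
  | m + 1, x => integral_nonneg fun y => mul_nonneg (hs y) (convIter_nonneg s hs m _)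

lemma convIter_integrable (s : ℝ → ℝ) (hs : Integrable s) : ∀ m, Integrable (convIter s m)
  | 0 => hs
  | m + 1 => by
    rw [convIter_succ_eq]
    exact hs.integrable_convolution _ (convIter_integrable s hs m)

lemma convIter_integral (s : ℝ → ℝ) (hs : Integrable s) (ht : ∫ x, s x = 1) :
    ∀ m, ∫ x, convIter s m x = 1
  | 0 => ht
  | m + 1 => by
    rw [convIter_succ_eq, integral_convolution _ hs (convIter_integrable s hs m)]
    simp [ht, convIter_integral s hs ht m]

lemma gauss_int (θ : ℝ) (hθ : 0 < θ) (n : ℝ) (hn : 0 < n) (w : ℝ) :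
    ∫ y : ℝ, Real.exp (-(w - y / n) ^ 2 / (4 * θ ^ 2)) = 2 * θ * n * Real.sqrt Real.pi := by
  have h1 : ∀ y : ℝ, -(w - y / n) ^ 2 / (4 * θ ^ 2) = -(1/(4*θ^2*n^2)) * (y - n*w)^2 := by
    intro y; field_simp; ring
  simp_rw [h1]
  have h2 := MeasureTheory.integral_sub_right_eq_self (μ := volume)
    (fun x : ℝ => Real.exp (-(1/(4*θ^2*n^2)) * x^2)) (n*w)
  rw [h2, integral_gaussian,
    show Real.pi / (1/(4*θ^2*n^2)) = (2*θ*n)^2 * Real.pi by field_simp; ring,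
    Real.sqrt_mul (sq_nonneg _), Real.sqrt_sq (by positivity)]

theorem gaussian_convolution_bound
    (θ B β : ℝ) (n k : ℕ)
    (hθ : 0 < θ) (hB : 0 < B) (hβ : 1 ≤ β) (hkn : k < n)
    (s : ℝ → ℝ)
    (hs_nonneg : ∀ x, 0 ≤ s x) (hs_int : Integrable s)
    (hs_tot : ∫ x, s x = 1)
    (hs_bound : ∀ u : ℝ,
      convIter s (n - k - 1) u
        ≤ B * (n - k : ℝ) / (((n : ℝ) - k) ^ ((β + 1) / β) + |u| ^ (1 + β))) :
    ∀ w : ℝ, 0 < w →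
      ∫ y : ℝ, Real.exp (-(w - y / n) ^ 2 / (4 * θ ^ 2)) * convIter s (n - k - 1) y
        ≤ min 1
            ((2 : ℝ) ^ (2 + β) * B * θ * Real.sqrt Real.pi /
                ((n : ℝ) ^ (β - 1) * w ^ (1 + β))
              + Real.exp (-w ^ 2 / (16 * θ ^ 2))) := by
  intro w hw
  set m := n - k - 1 with hm
  set g := convIter s m with hgdef
  have hg_nonneg : ∀ x, 0 ≤ g x := convIter_nonneg s hs_nonneg m
  have hg_int : Integrable g := convIter_integrable s hs_int m
  have hg_tot : ∫ x, g x = 1 := convIter_integral s hs_int hs_tot m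
  have hn : (0 : ℝ) < n := by exact_mod_cast (Nat.zero_le k).trans_lt hkn
  have hkn' : (k : ℝ) < n := by exact_mod_cast hkn
  set E : ℝ → ℝ := fun y => Real.exp (-(w - y / n) ^ 2 / (4 * θ ^ 2)) with hE
  have hE_cont : Continuous E := by
    apply Real.continuous_exp.comp
    fun_prop
  have hE_nonneg : ∀ y, 0 ≤ E y := fun y => (Real.exp_pos _).le
  have hE_le_one : ∀ y, E y ≤ 1 := by
    intro y
    apply Real.exp_le_one_iff.mpr
    apply div_nonpos_of_nonpos_of_nonneg (neg_nonpos.mpr (sq_nonneg _))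
    positivity
  have hF_meas : AEStronglyMeasurable (fun y => E y * g y) volume :=
    hE_cont.aestronglyMeasurable.mul hg_int.aestronglyMeasurable
  have hF_le : ∀ y, E y * g y ≤ g y := fun y =>
    mul_le_of_le_one_left (hg_nonneg y) (hE_le_one y)
  have hF_nonneg : ∀ y, 0 ≤ E y * g y := fun y => mul_nonneg (hE_nonneg y) (hg_nonneg y)
  have hF_int : Integrable (fun y => E y * g y) := by
    refine hg_int.mono hF_meas ?_
    filter_upwards with y
    rw [Real.norm_of_nonneg (hF_nonneg y), Real.norm_of_nonneg (hg_nonneg y)]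
    exact hF_le y
  -- integrability of E
  have hE_int : Integrable E := by
    have h1 : ∀ y : ℝ, -(w - y / n) ^ 2 / (4 * θ ^ 2) = -(1/(4*θ^2*(n:ℝ)^2)) * (y - n*w)^2 := by
      intro y; field_simp; ring
    have heq : E = fun y => Real.exp (-(1/(4*θ^2*(n:ℝ)^2)) * (y - n*w)^2) := by
      funext y; simp only [hE]; rw [h1]
    rw [heq]
    have hb : 0 < 1/(4*θ^2*(n:ℝ)^2) := by positivity
    exact (integrable_exp_neg_mul_sq hb).comp_sub_right (n*w)
  rw [le_min_iff]
  constructor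
  · calc ∫ y, E y * g y ≤ ∫ y, g y := integral_mono hF_int hg_int hF_le
    _ = 1 := hg_tot
  -- now the main bound
  set A : Set ℝ := {y | w / 2 ≤ |w - y / n|} with hA
  have hA_meas : MeasurableSet A := by
    have hc : Continuous fun y : ℝ => |w - y / n| := by fun_prop
    exact hc.measurable measurableSet_Ici
  have hsplit : ∫ y, E y * g y = (∫ y in A, E y * g y) + ∫ y in Aᶜ, E y * g y :=
    (integral_add_compl hA_meas hF_int).symm
  have hpartA : (∫ y in A, E y * g y) ≤ Real.exp (-w ^ 2 / (16 * θ ^ 2)) := by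
    have step1 : (∫ y in A, E y * g y) ≤ ∫ y in A, Real.exp (-w ^ 2 / (16 * θ ^ 2)) * g y := by
      apply setIntegral_mono_on hF_int.integrableOn (hg_int.const_mul _).integrableOn hA_meas
      intro y hy
      apply mul_le_mul_of_nonneg_right _ (hg_nonneg y)
      apply Real.exp_le_exp.mpr
      have h1 : w / 2 ≤ |w - y / n| := hy
      have h2 : (w / 2) ^ 2 ≤ (w - y / n) ^ 2 := by
        rw [← sq_abs (w - y / n)]
        exact pow_le_pow_left₀ (by positivity) h1 2
      have hθ2 : (0:ℝ) < 4 * θ ^ 2 := by positivity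
      rw [div_le_div_iff₀ hθ2 (by positivity : (0:ℝ) < 16 * θ ^ 2)]
      nlinarith [mul_le_mul_of_nonneg_left h2 (by positivity : (0:ℝ) ≤ 16 * θ ^ 2)]
    calc (∫ y in A, E y * g y) ≤ ∫ y in A, Real.exp (-w ^ 2 / (16 * θ ^ 2)) * g y := step1
      _ = Real.exp (-w ^ 2 / (16 * θ ^ 2)) * ∫ y in A, g y := by rw [integral_const_mul]
      _ ≤ Real.exp (-w ^ 2 / (16 * θ ^ 2)) * 1 := by
          apply mul_le_mul_of_nonneg_left _ (Real.exp_pos _).le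
          rw [← hg_tot]
          exact setIntegral_le_integral hg_int (Filter.Eventually.of_forall hg_nonneg)
      _ = Real.exp (-w ^ 2 / (16 * θ ^ 2)) := mul_one _
  -- part over complement
  set C : ℝ := B * ((n : ℝ) - k) / ((n * w / 2) ^ (1 + β)) with hC
  have hnw : (0 : ℝ) < n * w / 2 := by positivity
  have hden : (0 : ℝ) < ((n : ℝ) * w / 2) ^ (1 + β) := Real.rpow_pos_of_pos hnw _
  have hC_pos : 0 < C := by
    apply div_pos _ hden
    nlinarith
  have hg_le_C : ∀ y ∈ Aᶜ, g y ≤ C := by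
    intro y hy
    have hy' : |w - y / n| < w / 2 := not_le.mp hy
    have h1 : w / 2 < y / n := by
      have := abs_lt.mp hy'
      linarith [this.1, this.2]
    have h2 : n * w / 2 < y := by
      rw [div_lt_div_iff₀ (by norm_num : (0:ℝ) < 2) hn] at h1
      linarith
    have h3 : (n * w / 2 : ℝ) ^ (1 + β) ≤ |y| ^ (1 + β) := by
      apply Real.rpow_le_rpow hnw.le _ (by linarith)
      exact h2.le.trans (le_abs_self y)
    have h4 : (n * w / 2 : ℝ) ^ (1 + β) ≤ ((n : ℝ) - k) ^ ((β + 1) / β) + |y| ^ (1 + β) := by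
      have : (0:ℝ) ≤ ((n : ℝ) - k) ^ ((β + 1) / β) :=
        (Real.rpow_pos_of_pos (by linarith) _).le
      linarith
    calc g y ≤ B * ((n : ℝ) - k) / (((n : ℝ) - k) ^ ((β + 1) / β) + |y| ^ (1 + β)) :=
          hs_bound y
      _ ≤ C := by
          rw [hC]
          apply div_le_div_of_nonneg_left (by nlinarith) hden h4
  have hpartB : (∫ y in Aᶜ, E y * g y) ≤
      (2:ℝ) ^ (2 + β) * B * θ * Real.sqrt Real.pi / ((n : ℝ) ^ (β - 1) * w ^ (1 + β)) := by
    have step1 : (∫ y in Aᶜ, E y * g y) ≤ ∫ y in Aᶜ, C * E y := by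
      apply setIntegral_mono_on hF_int.integrableOn (hE_int.const_mul _).integrableOn
        hA_meas.compl
      intro y hy
      calc E y * g y ≤ E y * C := mul_le_mul_of_nonneg_left (hg_le_C y hy) (hE_nonneg y)
        _ = C * E y := mul_comm _ _
    have step2 : (∫ y in Aᶜ, C * E y) ≤ C * (2 * θ * n * Real.sqrt Real.pi) := by
      rw [integral_const_mul]
      apply mul_le_mul_of_nonneg_left _ hC_pos.le
      rw [← gauss_int θ hθ n hn w]
      exact setIntegral_le_integral hE_int (Filter.Eventually.of_forall hE_nonneg)
    refine (step1.trans step2).trans ?_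
    -- arithmetic
    have hrw : ((n:ℝ) * w / 2) ^ (1 + β) = (n:ℝ) ^ (1 + β) * w ^ (1 + β) / (2:ℝ) ^ (1 + β) := by
      rw [Real.div_rpow (by positivity) (by norm_num), Real.mul_rpow hn.le hw.le]
    have h2b : (2:ℝ) ^ (2 + β) = 2 * (2:ℝ) ^ (1 + β) := by
      rw [show (2:ℝ) + β = 1 + (1 + β) by ring, Real.rpow_add (by norm_num), Real.rpow_one]
    have hnb : (n:ℝ) ^ (1 + β) = (n:ℝ) ^ (β - 1) * n * n := by
      rw [show (1:ℝ) + β = (β - 1) + 1 + 1 by ring, Real.rpow_add hn, Real.rpow_add hn,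
        Real.rpow_one]
    have hP : (0:ℝ) < Real.sqrt Real.pi := Real.sqrt_pos.mpr Real.pi_pos
    have hW : (0:ℝ) < w ^ (1 + β) := Real.rpow_pos_of_pos hw _
    have hN1 : (0:ℝ) < (n:ℝ) ^ (β - 1) := Real.rpow_pos_of_pos hn _
    have hT : (0:ℝ) < (2:ℝ) ^ (1 + β) := Real.rpow_pos_of_pos (by norm_num) _
    have hTD : (2:ℝ) ^ (1 + β) * (((n:ℝ) * w / 2) ^ (1 + β))
        = (n:ℝ) ^ (β - 1) * n * n * (w ^ (1 + β)) := by
      rw [hrw, hnb]; field_simp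
    rw [hC, div_mul_eq_mul_div, div_le_div_iff₀ hden (by positivity)]
    have hRHS : (2:ℝ) ^ (2 + β) * B * θ * Real.sqrt Real.pi * (((n:ℝ) * w / 2) ^ (1 + β))
        = 2 * B * θ * Real.sqrt Real.pi * ((n:ℝ) ^ (β - 1) * n * n * (w ^ (1 + β))) := by
      rw [h2b]
      linear_combination (2 * B * θ * Real.sqrt Real.pi) * hTD
    rw [hRHS]
    have hnk : (n:ℝ) - k ≤ n := by
      have : (0:ℝ) ≤ k := Nat.cast_nonneg k
      linarith
    calc B * ((n:ℝ) - k) * (2 * θ * n * Real.sqrt Real.pi) * ((n:ℝ) ^ (β - 1) * w ^ (1 + β))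
        = ((n:ℝ) - k) * (2 * B * θ * Real.sqrt Real.pi * ((n:ℝ) ^ (β - 1) * n * w ^ (1 + β))) := by
          ring
      _ ≤ (n:ℝ) * (2 * B * θ * Real.sqrt Real.pi * ((n:ℝ) ^ (β - 1) * n * w ^ (1 + β))) := by
          apply mul_le_mul_of_nonneg_right hnk (by positivity)
      _ = 2 * B * θ * Real.sqrt Real.pi * ((n:ℝ) ^ (β - 1) * n * n * (w ^ (1 + β))) := by
          ring
  rw [hsplit]
  linarith [hpartA, hpartB]
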